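/- Let G be a compact topological group with Haar probability measure μ, V and E finite sets, s, t : E → V, and let w : G^E → ℝ be a nonnegative bounded measurable gauge-invariant weight with ∫ w dμ^E > 0 (gauge invariance: w(Φ_h g) = w(g) for all h : V → G, where (Φ_h g)(b) = h(s b)·g(b)·(h(t b))⁻¹). Let b₁, …, b_n ∈ E be distinct bonds such that each b_j has distinct endpoints (s b_j ≠ t b_j) and the endpoint sets {s b_j, t b_j} are pairwise disjoint for different j. Then for all bounded measurable F_j : G → ℂ, the expectation factorizes: ( ∫_{G^E} ∏_{j=1}^{n} F_j(g(b_j)) · w(g) dμ^E(g) ) / ( ∫_{G^E} w dμ^E ) = ∏_{j=1}^{n} ∫_G F_j dμ. -/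

import Mathlib

open MeasureTheory
open scoped NNReal ENNReal

section Aux

lemma haar_right_inv {G : Type*} [Group G] [TopologicalSpace G] [IsTopologicalGroup G]
    [CompactSpace G] [MeasurableSpace G] [BorelSpace G]
    (μ : Measure G) [μ.IsHaarMeasure] [IsProbabilityMeasure μ] :
    μ.IsMulRightInvariant := by
  constructor
  intro g
  haveI : IsProbabilityMeasure (μ.map (· * g)) :=
    Measure.isProbabilityMeasure_map (measurable_mul_const g).aemeasurable
  have h := Measure.isMulInvariant_eq_smul_of_compactSpace (μ.map (· * g)) μ
  have hc : ((Measure.haarScalarFactor (μ.map (· * g)) μ : NNReal) : ENNReal) = 1 := by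
    have h2 := congrArg (fun ν : Measure G => ν Set.univ) h
    simpa [Measure.smul_apply] using h2.symm
  rw [h]
  have : Measure.haarScalarFactor (μ.map (· * g)) μ = 1 := by
    exact_mod_cast hc
  rw [this, one_smul]

lemma measurePreserving_piMap' {ι : Type*} [Fintype ι] {α : ι → Type*}
    [∀ i, MeasurableSpace (α i)] (μ : ∀ i, Measure (α i)) [∀ i, IsProbabilityMeasure (μ i)]
    (f : ∀ i, α i → α i) (hf : ∀ i, MeasurePreserving (f i) (μ i) (μ i)) :
    MeasurePreserving (fun g i => f i (g i)) (Measure.pi μ) (Measure.pi μ) := by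
  have hm : Measurable fun (g : ∀ i, α i) i => f i (g i) :=
    measurable_pi_iff.2 fun i => (hf i).measurable.comp (measurable_pi_apply i)
  refine ⟨hm, (Measure.pi_eq fun s hs => ?_).symm⟩
  rw [Measure.map_apply hm (MeasurableSet.univ_pi hs)]
  have hpre : (fun g i => f i (g i)) ⁻¹' (Set.univ.pi s) = Set.univ.pi fun i => f i ⁻¹' s i := by
    ext g; simp [Set.mem_pi]
  rw [hpre, Measure.pi_pi]
  exact Finset.prod_congr rfl fun i _ => (hf i).measure_preimage (hs i).nullMeasurableSet

lemma integrable_of_bdd {α : Type*} [MeasurableSpace α] {ν : Measure α} [IsFiniteMeasure ν]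
    {β : Type*} [NormedAddCommGroup β]
    {f : α → β} (hf : AEStronglyMeasurable f ν) {C : ℝ} (hC : ∀ x, ‖f x‖ ≤ C) :
    Integrable f ν :=
  ⟨hf, HasFiniteIntegral.of_bounded (Filter.Eventually.of_forall hC)⟩

variable {G : Type*} [Group G] [TopologicalSpace G] [IsTopologicalGroup G] [CompactSpace G]
    [MeasurableSpace G] [BorelSpace G]
    (μ : Measure G) [μ.IsHaarMeasure] [IsProbabilityMeasure μ]
    {E : Type*} [Fintype E]

/-- Single-bond Elitzur identity, nonnegative real weight. -/
lemma single_bond_nonneg (e₀ : E)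
    (W : (E → G) → ℝ) (hW_meas : Measurable W) (hW_nonneg : ∀ g, 0 ≤ W g)
    (CW : ℝ) (hW_bdd : ∀ g, W g ≤ CW)
    (hinv : ∀ k : G, ∃ Φ : (E → G) → (E → G),
      MeasurePreserving Φ (Measure.pi fun _ : E => μ) (Measure.pi fun _ : E => μ) ∧
      (∀ g, Φ g e₀ = k * g e₀) ∧ (∀ g, W (Φ g) = W g))
    (F : G → ℂ) (hF_meas : Measurable F) :
    ∫ g, F (g e₀) * ((W g : ℝ) : ℂ) ∂(Measure.pi fun _ : E => μ)
      = (∫ x, F x ∂μ) * ((∫ g, W g ∂(Measure.pi fun _ : E => μ) : ℝ) : ℂ) := by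
  set ν : Measure (E → G) := Measure.pi fun _ : E => μ with hν
  set D : (E → G) → ℝ≥0 := fun g => (W g).toNNReal with hD
  have hD_meas : Measurable D := hW_meas.real_toNNReal
  set ν₁ : Measure (E → G) := ν.withDensity fun g => (D g : ℝ≥0∞) with hν₁
  have heval : Measurable fun g : E → G => g e₀ := measurable_pi_apply e₀
  set ρ : Measure G := ν₁.map (fun g => g e₀) with hρ
  haveI hfin : IsFiniteMeasure ν₁ := by
    constructor
    rw [hν₁, withDensity_apply _ MeasurableSet.univ, setLIntegral_univ]
    calc ∫⁻ g, (D g : ℝ≥0∞) ∂ν ≤ ∫⁻ _, ENNReal.ofReal CW ∂ν :=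
          lintegral_mono fun g => by
            simpa [hD, ENNReal.ofReal] using ENNReal.coe_le_coe.2 (Real.toNNReal_mono (hW_bdd g))
      _ < ⊤ := by simp [lintegral_const]
  haveI : IsFiniteMeasure ρ := by
    rw [hρ]
    exact Measure.isFiniteMeasure_map ν₁ _
  haveI : ρ.IsMulLeftInvariant := by
    constructor
    intro k
    obtain ⟨Φ, hΦmp, hΦe, hΦW⟩ := hinv k
    have hDΦ : ∀ g, D (Φ g) = D g := fun g => by simp [hD, hΦW g]
    refine Measure.ext fun A hA => ?_
    have hA' : MeasurableSet ((fun x => k * x) ⁻¹' A) := hA.preimage (measurable_const_mul k)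
    rw [Measure.map_apply (measurable_const_mul k) hA, hρ,
      Measure.map_apply heval hA', Measure.map_apply heval hA, hν₁,
      withDensity_apply _ (hA'.preimage heval), withDensity_apply _ (hA.preimage heval),
      ← lintegral_indicator (hA'.preimage heval), ← lintegral_indicator (hA.preimage heval)]
    have hind : Measurable fun g : E → G =>
        Set.indicator ((fun g : E → G => g e₀) ⁻¹' A) (fun g => (D g : ℝ≥0∞)) g :=
      (hD_meas.coe_nnreal_ennreal).indicator (hA.preimage heval)
    have hcomp := hΦmp.lintegral_comp hind
    have hpt : ∀ g, Set.indicator ((fun g : E → G => g e₀) ⁻¹' A)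
        (fun g => (D g : ℝ≥0∞)) (Φ g)
        = Set.indicator ((fun g : E → G => g e₀) ⁻¹' ((fun x => k * x) ⁻¹' A))
            (fun g => (D g : ℝ≥0∞)) g := by
      intro g
      by_cases hm : k * g e₀ ∈ A
      · rw [Set.indicator_of_mem (by simpa [Set.mem_preimage, hΦe g] using hm),
          Set.indicator_of_mem (by simpa [Set.mem_preimage] using hm), hDΦ g]
      · rw [Set.indicator_of_notMem (by simpa [Set.mem_preimage, hΦe g] using hm),
          Set.indicator_of_notMem (by simpa [Set.mem_preimage] using hm)]
    rw [← hcomp]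
    exact lintegral_congr fun g => (hpt g).symm
  have hsmul := Measure.isMulInvariant_eq_smul_of_compactSpace ρ μ
  set c : NNReal := Measure.haarScalarFactor ρ μ with hc
  have hL : ∫ g, F (g e₀) * ((W g : ℝ) : ℂ) ∂ν = ∫ x, F x ∂ρ := by
    rw [hρ, integral_map heval.aemeasurable hF_meas.aestronglyMeasurable, hν₁,
      integral_withDensity_eq_integral_smul hD_meas]
    refine integral_congr_ae (Filter.Eventually.of_forall fun g => ?_)
    beta_reduce
    rw [NNReal.smul_def, hD]
    simp only [Real.coe_toNNReal _ (hW_nonneg g)]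
    rw [Complex.real_smul, mul_comm]
  have hFρ : ∫ x, F x ∂ρ = (c : ℝ) • ∫ x, F x ∂μ := by
    rw [hsmul, integral_smul_nnreal_measure, NNReal.smul_def]
  have hcρ : (c : ℝ≥0∞) = ρ Set.univ := by
    conv_rhs => rw [hsmul]
    simp [Measure.coe_nnreal_smul_apply]
  have hWint : ∫ g, W g ∂ν = (c : ℝ) := by
    have h1 : ρ Set.univ = ∫⁻ g, (D g : ℝ≥0∞) ∂ν := by
      rw [hρ, Measure.map_apply heval MeasurableSet.univ, Set.preimage_univ, hν₁,
        withDensity_apply _ MeasurableSet.univ, setLIntegral_univ]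
    rw [integral_eq_lintegral_of_nonneg_ae (Filter.Eventually.of_forall hW_nonneg)
      hW_meas.aestronglyMeasurable]
    have h2 : ∀ g, ENNReal.ofReal (W g) = (D g : ℝ≥0∞) := fun g => rfl
    simp only [h2]
    rw [← h1, ← hcρ]
    simp
  rw [hL, hFρ, hWint, Complex.real_smul, mul_comm]

/-- Single-bond Elitzur identity, signed real weight. -/
lemma single_bond_real (e₀ : E)
    (W : (E → G) → ℝ) (hW_meas : Measurable W)
    (CW : ℝ) (hW_bdd : ∀ g, |W g| ≤ CW)
    (hinv : ∀ k : G, ∃ Φ : (E → G) → (E → G),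
      MeasurePreserving Φ (Measure.pi fun _ : E => μ) (Measure.pi fun _ : E => μ) ∧
      (∀ g, Φ g e₀ = k * g e₀) ∧ (∀ g, W (Φ g) = W g))
    (F : G → ℂ) (hF_meas : Measurable F) (CF : ℝ) (hF_bdd : ∀ x, ‖F x‖ ≤ CF) :
    ∫ g, F (g e₀) * ((W g : ℝ) : ℂ) ∂(Measure.pi fun _ : E => μ)
      = (∫ x, F x ∂μ) * ((∫ g, W g ∂(Measure.pi fun _ : E => μ) : ℝ) : ℂ) := by
  set ν : Measure (E → G) := Measure.pi fun _ : E => μ with hν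
  set Wp : (E → G) → ℝ := fun g => max (W g) 0 with hWp
  set Wm : (E → G) → ℝ := fun g => max (-W g) 0 with hWm
  have hWp_meas : Measurable Wp := hW_meas.max measurable_const
  have hWm_meas : Measurable Wm := hW_meas.neg.max measurable_const
  have hWp_nonneg : ∀ g, 0 ≤ Wp g := fun g => le_max_right _ _
  have hWm_nonneg : ∀ g, 0 ≤ Wm g := fun g => le_max_right _ _
  have hCW0 : 0 ≤ CW := le_trans (abs_nonneg _) (hW_bdd fun _ => 1)
  have hWp_bdd : ∀ g, Wp g ≤ CW :=
    fun g => max_le (le_trans (le_abs_self _) (hW_bdd g)) hCW0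
  have hWm_bdd : ∀ g, Wm g ≤ CW :=
    fun g => max_le (le_trans (neg_le_abs _) (hW_bdd g)) hCW0
  have hinvp : ∀ k : G, ∃ Φ : (E → G) → (E → G),
      MeasurePreserving Φ ν ν ∧ (∀ g, Φ g e₀ = k * g e₀) ∧ (∀ g, Wp (Φ g) = Wp g) := by
    intro k; obtain ⟨Φ, h1, h2, h3⟩ := hinv k
    exact ⟨Φ, h1, h2, fun g => by rw [hWp]; simp only [h3 g]⟩
  have hinvm : ∀ k : G, ∃ Φ : (E → G) → (E → G),
      MeasurePreserving Φ ν ν ∧ (∀ g, Φ g e₀ = k * g e₀) ∧ (∀ g, Wm (Φ g) = Wm g) := by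
    intro k; obtain ⟨Φ, h1, h2, h3⟩ := hinv k
    exact ⟨Φ, h1, h2, fun g => by rw [hWm]; simp only [h3 g]⟩
  have hp := single_bond_nonneg μ e₀ Wp hWp_meas hWp_nonneg CW hWp_bdd hinvp F hF_meas
  have hm := single_bond_nonneg μ e₀ Wm hWm_meas hWm_nonneg CW hWm_bdd hinvm F hF_meas
  have hsub : ∀ g, W g = Wp g - Wm g := fun g => (max_zero_sub_max_neg_zero_eq_self (W g)).symm
  have hintp : Integrable (fun g => F (g e₀) * ((Wp g : ℝ) : ℂ)) ν := by
    refine integrable_of_bdd ?_ (C := CF * CW) fun g => ?_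
    · exact ((hF_meas.comp (measurable_pi_apply e₀)).mul
        (Complex.measurable_ofReal.comp hWp_meas)).aestronglyMeasurable
    · rw [norm_mul, Complex.norm_real, Real.norm_eq_abs, abs_of_nonneg (hWp_nonneg g)]
      exact mul_le_mul (hF_bdd _) (hWp_bdd g) (hWp_nonneg g)
        (le_trans (norm_nonneg _) (hF_bdd 1))
  have hintm : Integrable (fun g => F (g e₀) * ((Wm g : ℝ) : ℂ)) ν := by
    refine integrable_of_bdd ?_ (C := CF * CW) fun g => ?_
    · exact ((hF_meas.comp (measurable_pi_apply e₀)).mul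
        (Complex.measurable_ofReal.comp hWm_meas)).aestronglyMeasurable
    · rw [norm_mul, Complex.norm_real, Real.norm_eq_abs, abs_of_nonneg (hWm_nonneg g)]
      exact mul_le_mul (hF_bdd _) (hWm_bdd g) (hWm_nonneg g)
        (le_trans (norm_nonneg _) (hF_bdd 1))
  have hintWp : Integrable Wp ν := by
    refine integrable_of_bdd hWp_meas.aestronglyMeasurable (C := CW) fun g => ?_
    rw [Real.norm_eq_abs, abs_of_nonneg (hWp_nonneg g)]; exact hWp_bdd g
  have hintWm : Integrable Wm ν := by
    refine integrable_of_bdd hWm_meas.aestronglyMeasurable (C := CW) fun g => ?_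
    rw [Real.norm_eq_abs, abs_of_nonneg (hWm_nonneg g)]; exact hWm_bdd g
  have e1 : ∫ g, F (g e₀) * ((W g : ℝ) : ℂ) ∂ν
      = (∫ g, F (g e₀) * ((Wp g : ℝ) : ℂ) ∂ν) - ∫ g, F (g e₀) * ((Wm g : ℝ) : ℂ) ∂ν := by
    rw [← integral_sub hintp hintm]
    refine integral_congr_ae (Filter.Eventually.of_forall fun g => ?_)
    beta_reduce
    rw [hsub g]
    push_cast
    ring
  have e2 : ∫ g, W g ∂ν = (∫ g, Wp g ∂ν) - ∫ g, Wm g ∂ν := by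
    rw [← integral_sub hintWp hintWm]
    exact integral_congr_ae (Filter.Eventually.of_forall fun g => hsub g)
  rw [e1, hp, hm, e2]
  push_cast
  ring

/-- Single-bond Elitzur identity, complex weight. -/
lemma single_bond_complex (e₀ : E)
    (W : (E → G) → ℂ) (hW_meas : Measurable W)
    (CW : ℝ) (hW_bdd : ∀ g, ‖W g‖ ≤ CW)
    (hinv : ∀ k : G, ∃ Φ : (E → G) → (E → G),
      MeasurePreserving Φ (Measure.pi fun _ : E => μ) (Measure.pi fun _ : E => μ) ∧
      (∀ g, Φ g e₀ = k * g e₀) ∧ (∀ g, W (Φ g) = W g))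
    (F : G → ℂ) (hF_meas : Measurable F) (CF : ℝ) (hF_bdd : ∀ x, ‖F x‖ ≤ CF) :
    ∫ g, F (g e₀) * W g ∂(Measure.pi fun _ : E => μ)
      = (∫ x, F x ∂μ) * ∫ g, W g ∂(Measure.pi fun _ : E => μ) := by
  set ν : Measure (E → G) := Measure.pi fun _ : E => μ with hν
  set Wr : (E → G) → ℝ := fun g => (W g).re with hWr
  set Wi : (E → G) → ℝ := fun g => (W g).im with hWi
  have hWr_meas : Measurable Wr := Complex.measurable_re.comp hW_meas
  have hWi_meas : Measurable Wi := Complex.measurable_im.comp hW_meas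
  have hWr_bdd : ∀ g, |Wr g| ≤ CW := fun g => le_trans (Complex.abs_re_le_norm _) (hW_bdd g)
  have hWi_bdd : ∀ g, |Wi g| ≤ CW := fun g => le_trans (Complex.abs_im_le_norm _) (hW_bdd g)
  have hinvr : ∀ k : G, ∃ Φ : (E → G) → (E → G),
      MeasurePreserving Φ ν ν ∧ (∀ g, Φ g e₀ = k * g e₀) ∧ (∀ g, Wr (Φ g) = Wr g) := by
    intro k; obtain ⟨Φ, h1, h2, h3⟩ := hinv k
    exact ⟨Φ, h1, h2, fun g => by rw [hWr]; simp only [h3 g]⟩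
  have hinvi : ∀ k : G, ∃ Φ : (E → G) → (E → G),
      MeasurePreserving Φ ν ν ∧ (∀ g, Φ g e₀ = k * g e₀) ∧ (∀ g, Wi (Φ g) = Wi g) := by
    intro k; obtain ⟨Φ, h1, h2, h3⟩ := hinv k
    exact ⟨Φ, h1, h2, fun g => by rw [hWi]; simp only [h3 g]⟩
  have hr := single_bond_real μ e₀ Wr hWr_meas CW hWr_bdd hinvr F hF_meas CF hF_bdd
  have hi := single_bond_real μ e₀ Wi hWi_meas CW hWi_bdd hinvi F hF_meas CF hF_bdd
  have hintr : Integrable (fun g => F (g e₀) * ((Wr g : ℝ) : ℂ)) ν := by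
    refine integrable_of_bdd ?_ (C := CF * CW) fun g => ?_
    · exact ((hF_meas.comp (measurable_pi_apply e₀)).mul
        (Complex.measurable_ofReal.comp hWr_meas)).aestronglyMeasurable
    · rw [norm_mul, Complex.norm_real]
      exact mul_le_mul (hF_bdd _) (hWr_bdd g) (abs_nonneg _)
        (le_trans (norm_nonneg _) (hF_bdd 1))
  have hinti : Integrable (fun g => (F (g e₀) * ((Wi g : ℝ) : ℂ)) * Complex.I) ν := by
    refine integrable_of_bdd ?_ (C := CF * CW * 1) fun g => ?_
    · exact (((hF_meas.comp (measurable_pi_apply e₀)).mul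
        (Complex.measurable_ofReal.comp hWi_meas)).mul measurable_const).aestronglyMeasurable
    · rw [norm_mul, norm_mul, Complex.norm_real, Complex.norm_I]
      refine mul_le_mul ?_ le_rfl zero_le_one
        (mul_nonneg (le_trans (norm_nonneg _) (hF_bdd 1)) (le_trans (abs_nonneg _) (hWr_bdd 1)))
      exact mul_le_mul (hF_bdd _) (hWi_bdd g) (abs_nonneg _)
        (le_trans (norm_nonneg _) (hF_bdd 1))
  have hintWr : Integrable (fun g => ((Wr g : ℝ) : ℂ)) ν := by
    refine integrable_of_bdd (Complex.measurable_ofReal.comp hWr_meas).aestronglyMeasurable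
      (C := CW) fun g => ?_
    rw [Complex.norm_real]; exact hWr_bdd g
  have hintWi : Integrable (fun g => ((Wi g : ℝ) : ℂ) * Complex.I) ν := by
    refine integrable_of_bdd ((Complex.measurable_ofReal.comp hWi_meas).mul
      measurable_const).aestronglyMeasurable (C := CW * 1) fun g => ?_
    rw [norm_mul, Complex.norm_real, Complex.norm_I]
    exact mul_le_mul (hWi_bdd g) le_rfl zero_le_one (le_trans (abs_nonneg _) (hWr_bdd 1))
  have e1 : ∫ g, F (g e₀) * W g ∂ν
      = (∫ g, F (g e₀) * ((Wr g : ℝ) : ℂ) ∂ν)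
        + ∫ g, (F (g e₀) * ((Wi g : ℝ) : ℂ)) * Complex.I ∂ν := by
    rw [← integral_add hintr hinti]
    refine integral_congr_ae (Filter.Eventually.of_forall fun g => ?_)
    beta_reduce
    conv_lhs => rw [← Complex.re_add_im (W g)]
    ring
  have e2 : ∫ g, W g ∂ν
      = (∫ g, ((Wr g : ℝ) : ℂ) ∂ν) + ∫ g, ((Wi g : ℝ) : ℂ) * Complex.I ∂ν := by
    rw [← integral_add hintWr hintWi]
    refine integral_congr_ae (Filter.Eventually.of_forall fun g => ?_)
    beta_reduce
    exact (Complex.re_add_im (W g)).symm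
  have e3 : ∫ g, (F (g e₀) * ((Wi g : ℝ) : ℂ)) * Complex.I ∂ν
      = (∫ g, F (g e₀) * ((Wi g : ℝ) : ℂ) ∂ν) * Complex.I := integral_mul_const _ _
  have e4 : ∫ g, ((Wi g : ℝ) : ℂ) * Complex.I ∂ν
      = (∫ g, ((Wi g : ℝ) : ℂ) ∂ν) * Complex.I := integral_mul_const _ _
  have e5 : ∫ g, ((Wr g : ℝ) : ℂ) ∂ν = ((∫ g, Wr g ∂ν : ℝ) : ℂ) := integral_ofReal
  have e6 : ∫ g, ((Wi g : ℝ) : ℂ) ∂ν = ((∫ g, Wi g ∂ν : ℝ) : ℂ) := integral_ofReal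
  rw [e1, e3, hr, hi, e2, e4, e5, e6]
  ring

end Aux

/-- Elitzur's theorem for a finite collection of vertex-disjoint bonds: the normalized
expectation of a product of bounded measurable functions of distinct, pairwise vertex-disjoint
bond variables factorizes into the product of the free single-bond Haar averages. -/
theorem elitzur_disjoint_bonds
    {G : Type*} [Group G] [TopologicalSpace G] [IsTopologicalGroup G] [CompactSpace G]
    [MeasurableSpace G] [BorelSpace G]
    (μ : Measure G) [μ.IsHaarMeasure] [IsProbabilityMeasure μ]
    {V E : Type*} [Fintype V] [Fintype E] (s t : E → V)
    (w : (E → G) → ℝ) (hw_meas : Measurable w) (hw_nonneg : ∀ g, 0 ≤ w g)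
    (hw_bdd : ∃ C, ∀ g, w g ≤ C)
    (hw_pos : 0 < ∫ g, w g ∂(Measure.pi fun _ : E => μ))
    (hw_gauge : ∀ (h : V → G) (g : E → G),
      w (fun b => h (s b) * g b * (h (t b))⁻¹) = w g)
    (n : ℕ) (b : Fin n → E) (hb_inj : Function.Injective b)
    (hb_loop : ∀ j, s (b j) ≠ t (b j))
    (hb_disj : ∀ j k, j ≠ k →
      s (b j) ≠ s (b k) ∧ s (b j) ≠ t (b k) ∧ t (b j) ≠ s (b k) ∧ t (b j) ≠ t (b k))
    (F : Fin n → G → ℂ) (hF_meas : ∀ j, Measurable (F j))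
    (hF_bdd : ∀ j, ∃ C, ∀ x, ‖F j x‖ ≤ C) :
    (∫ g, (∏ j, F j (g (b j))) * ((w g : ℝ) : ℂ) ∂(Measure.pi fun _ : E => μ)) /
        (∫ g, ((w g : ℝ) : ℂ) ∂(Measure.pi fun _ : E => μ))
      = ∏ j, ∫ x, F j x ∂μ := by
  haveI : μ.IsMulRightInvariant := haar_right_inv μ
  set ν : Measure (E → G) := Measure.pi fun _ : E => μ with hν
  obtain ⟨Cw, hCw⟩ := hw_bdd
  choose CF hCF using hF_bdd
  have hCF0 : ∀ j, 0 ≤ CF j := fun j => le_trans (norm_nonneg _) (hCF j 1)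
  have hCw0 : 0 ≤ Cw := le_trans (hw_nonneg fun _ => 1) (hCw fun _ => 1)
  have claim : ∀ S : Finset (Fin n),
      (∫ g, (∏ j ∈ S, F j (g (b j))) * ((w g : ℝ) : ℂ) ∂ν)
        = (∏ j ∈ S, ∫ x, F j x ∂μ) * ∫ g, ((w g : ℝ) : ℂ) ∂ν := by
    intro S
    induction S using Finset.induction with
    | empty => simp
    | @insert j S hj ih =>
      simp only [Finset.prod_insert hj]
      have hW_meas : Measurable fun g : E → G =>
          (∏ i ∈ S, F i (g (b i))) * ((w g : ℝ) : ℂ) :=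
        (Finset.measurable_prod _ fun i _ =>
          (hF_meas i).comp (measurable_pi_apply (b i))).mul
          (Complex.measurable_ofReal.comp hw_meas)
      have hW_bdd : ∀ g, ‖(∏ i ∈ S, F i (g (b i))) * ((w g : ℝ) : ℂ)‖
          ≤ (∏ i ∈ S, CF i) * Cw := by
        intro g
        rw [norm_mul, Complex.norm_real, Real.norm_eq_abs, abs_of_nonneg (hw_nonneg g)]
        refine mul_le_mul ?_ (hCw g) (hw_nonneg g)
          (Finset.prod_nonneg fun i _ => hCF0 i)
        refine le_trans (Finset.norm_prod_le _ _) ?_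
        exact Finset.prod_le_prod (fun i _ => norm_nonneg _) fun i _ => hCF i _
      have hinv : ∀ k : G, ∃ Φ : (E → G) → (E → G),
          MeasurePreserving Φ ν ν ∧ (∀ g, Φ g (b j) = k * g (b j)) ∧
          (∀ g, (∏ i ∈ S, F i (Φ g (b i))) * ((w (Φ g) : ℝ) : ℂ)
            = (∏ i ∈ S, F i (g (b i))) * ((w g : ℝ) : ℂ)) := by
        intro k
        classical
        refine ⟨fun g e => (if s e = s (b j) then k else 1) * g e *
          (if t e = s (b j) then k else 1)⁻¹, ?_, ?_, ?_⟩
        · exact measurePreserving_piMap' _ _ fun e =>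
            (measurePreserving_mul_right μ (if t e = s (b j) then k else 1)⁻¹).comp
              (measurePreserving_mul_left μ (if s e = s (b j) then k else 1))
        · intro g
          beta_reduce
          rw [if_pos rfl, if_neg (hb_loop j).symm, inv_one, mul_one]
        · intro g
          beta_reduce
          have hwg := hw_gauge (fun v => if v = s (b j) then k else 1) g
          rw [hwg]
          congr 1
          refine Finset.prod_congr rfl fun i hi => ?_
          have hij : i ≠ j := fun h => hj (h ▸ hi)
          rw [if_neg (hb_disj i j hij).1, if_neg (hb_disj i j hij).2.2.1,
            inv_one, one_mul, mul_one]
      have key := single_bond_complex μ (b j)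
        (fun g => (∏ i ∈ S, F i (g (b i))) * ((w g : ℝ) : ℂ)) hW_meas
        ((∏ i ∈ S, CF i) * Cw) hW_bdd hinv (F j) (hF_meas j) (CF j) (hCF j)
      have e0 : ∀ g : E → G,
          (F j (g (b j)) * ∏ i ∈ S, F i (g (b i))) * ((w g : ℝ) : ℂ)
            = F j (g (b j)) * ((∏ i ∈ S, F i (g (b i))) * ((w g : ℝ) : ℂ)) := fun g => by ring
      simp only [e0]
      rw [key, ih, ← mul_assoc]
  rw [claim Finset.univ]
  have hW : (∫ g, ((w g : ℝ) : ℂ) ∂ν) = ((∫ g, w g ∂ν : ℝ) : ℂ) := integral_ofReal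
  have hW0 : (∫ g, ((w g : ℝ) : ℂ) ∂ν) ≠ 0 := by
    rw [hW]
    exact_mod_cast ne_of_gt hw_pos
  rw [mul_div_assoc, div_self hW0, mul_one]
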